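/- (Kenny Brown's lemma.) Let M be a model category with finite colimits, let R be a category, and let W_R be a class of morphisms of R that contains all isomorphisms, is closed under composition, and satisfies the two-out-of-three property. If a functor F : M ⥤ R sends every trivial cofibration between cofibrant objects of M to a morphism in W_R, then F sends every weak equivalence between cofibrant objects of M to a morphism in W_R. -/

import Mathlib

open CategoryTheory Limits

universe w v u

namespace Paper

/-- `f` is a retract of `g` in the arrow category. -/
def IsRetract {M : Type u} [Category.{v} M] {a b x y : M} (f : a ⟶ b) (g : x ⟶ y) : Prop :=
  ∃ (i : a ⟶ x) (r : x ⟶ a) (i' : b ⟶ y) (r' : y ⟶ b),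
    i ≫ r = 𝟙 a ∧ i' ≫ r' = 𝟙 b ∧ i ≫ g = f ≫ i' ∧ g ≫ r' = r ≫ f

/-- A (Quillen) model structure on a category `M`: classes of weak equivalences,
cofibrations and fibrations, containing all isomorphisms, with the two-out-of-three
property for weak equivalences, all three classes closed under retracts, the lifting
axioms, and the two factorization axioms. -/
structure ModelStructure (M : Type u) [Category.{v} M] where
  W : MorphismProperty M
  Cof : MorphismProperty M
  Fib : MorphismProperty M
  iso_W : MorphismProperty.isomorphisms M ≤ W
  iso_Cof : MorphismProperty.isomorphisms M ≤ Cof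
  iso_Fib : MorphismProperty.isomorphisms M ≤ Fib
  two_of_three : W.HasTwoOutOfThreeProperty
  retract_W : ∀ {a b x y : M} (f : a ⟶ b) (g : x ⟶ y), IsRetract f g → W g → W f
  retract_Cof : ∀ {a b x y : M} (f : a ⟶ b) (g : x ⟶ y), IsRetract f g → Cof g → Cof f
  retract_Fib : ∀ {a b x y : M} (f : a ⟶ b) (g : x ⟶ y), IsRetract f g → Fib g → Fib f
  lift_Cof_trivFib : ∀ {a b x y : M} (i : a ⟶ b) (p : x ⟶ y),
    Cof i → W p → Fib p → HasLiftingProperty i p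
  lift_trivCof_Fib : ∀ {a b x y : M} (i : a ⟶ b) (p : x ⟶ y),
    Cof i → W i → Fib p → HasLiftingProperty i p
  fact_Cof_trivFib : ∀ {x y : M} (f : x ⟶ y),
    ∃ (z : M) (i : x ⟶ z) (p : z ⟶ y), Cof i ∧ W p ∧ Fib p ∧ i ≫ p = f
  fact_trivCof_Fib : ∀ {x y : M} (f : x ⟶ y),
    ∃ (z : M) (i : x ⟶ z) (p : z ⟶ y), Cof i ∧ W i ∧ Fib p ∧ i ≫ p = f

variable {M : Type u} [Category.{v} M]

/-- An object is cofibrant if the map from the initial object to it is a cofibration. -/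
def ModelStructure.Cofibrant [HasInitial M] (S : ModelStructure M) (x : M) : Prop :=
  S.Cof (initial.to x)

/-- An object is fibrant if the map from it to the terminal object is a fibration. -/
def ModelStructure.Fibrant [HasTerminal M] (S : ModelStructure M) (x : M) : Prop :=
  S.Fib (terminal.from x)

end Paper

section Proof

open Paper

variable {M : Type u} [Category.{v} M]

lemma cof_of_llp (S : ModelStructure M) {a b : M} (i : a ⟶ b)
    (h : ∀ {x y : M} (p : x ⟶ y), S.W p → S.Fib p → HasLiftingProperty i p) : S.Cof i := by
  obtain ⟨z, j, q, hj, hq, hq', hfac⟩ := S.fact_Cof_trivFib i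
  haveI := h q hq hq'
  have sq : CommSq j i q (𝟙 b) := ⟨by simp [hfac]⟩
  exact S.retract_Cof i j
    ⟨𝟙 a, 𝟙 a, sq.lift, q, by simp, sq.fac_right, by simp [sq.fac_left], by simp [hfac]⟩ hj

lemma cof_comp (S : ModelStructure M) {a b c : M} {f : a ⟶ b} {g : b ⟶ c}
    (hf : S.Cof f) (hg : S.Cof g) : S.Cof (f ≫ g) := by
  refine cof_of_llp S _ (fun p hp hp' => ?_)
  haveI := S.lift_Cof_trivFib f p hf hp hp'
  haveI := S.lift_Cof_trivFib g p hg hp hp'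
  infer_instance

lemma cof_inl (S : ModelStructure M) [HasInitial M] [HasFiniteColimits M] {a b : M}
    (hb : S.Cofibrant b) : S.Cof (coprod.inl : a ⟶ a ⨿ b) := by
  refine cof_of_llp S _ (fun p hp hp' => ?_)
  haveI := S.lift_Cof_trivFib (initial.to b) p hb hp hp'
  constructor
  intro u v sq
  have sq' : CommSq (initial.to _) (initial.to b) p (coprod.inr ≫ v) :=
    ⟨by apply Subsingleton.elim⟩
  exact ⟨⟨⟨coprod.desc u sq'.lift, coprod.inl_desc _ _, by
    ext
    · exact (coprod.inl_desc_assoc _ _ _).trans sq.w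
    · exact (coprod.inr_desc_assoc _ _ _).trans sq'.fac_right⟩⟩⟩

lemma cof_inr (S : ModelStructure M) [HasInitial M] [HasFiniteColimits M] {a b : M}
    (ha : S.Cofibrant a) : S.Cof (coprod.inr : b ⟶ a ⨿ b) := by
  refine cof_of_llp S _ (fun p hp hp' => ?_)
  haveI := S.lift_Cof_trivFib (initial.to a) p ha hp hp'
  constructor
  intro u v sq
  have sq' : CommSq (initial.to _) (initial.to a) p (coprod.inl ≫ v) :=
    ⟨by apply Subsingleton.elim⟩
  exact ⟨⟨⟨coprod.desc sq'.lift u, coprod.inr_desc _ _, by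
    ext
    · exact (coprod.inl_desc_assoc _ _ _).trans sq'.fac_right
    · exact (coprod.inr_desc_assoc _ _ _).trans sq.w⟩⟩⟩

lemma W_id (S : ModelStructure M) (x : M) : S.W (𝟙 x) :=
  S.iso_W _ (inferInstanceAs (IsIso (𝟙 x)))

end Proof

section Statement2

open Paper

/-- **Kenny Brown's lemma.** Let `M` be a model category with finite colimits
and `W_R` a class of morphisms of a category `R` containing all isomorphisms, closed under
composition and satisfying two-out-of-three.  If `F : M ⥤ R` sends trivial cofibrations
between cofibrant objects into `W_R`, then it sends all weak equivalences between cofibrant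
objects into `W_R`. -/
theorem kenny_brown_lemma
    {M : Type u} {R : Type v} [Category M] [Category R]
    [HasFiniteColimits M] [HasInitial M]
    (S : ModelStructure M)
    (WR : MorphismProperty R)
    (hWR_iso : MorphismProperty.isomorphisms R ≤ WR)
    (hWR_comp : WR.IsStableUnderComposition)
    (hWR_23 : WR.HasTwoOutOfThreeProperty)
    (F : M ⥤ R)
    (hF : ∀ {a b : M} (f : a ⟶ b), S.Cofibrant a → S.Cofibrant b →
      S.W f → S.Cof f → WR (F.map f)) :
    ∀ {a b : M} (f : a ⟶ b), S.Cofibrant a → S.Cofibrant b → S.W f → WR (F.map f) := by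
  intro a b f ha hb hf
  haveI := S.two_of_three
  haveI := hWR_23
  obtain ⟨z, i, p, hi, hpW, hpF, hfac⟩ := S.fact_Cof_trivFib (coprod.desc f (𝟙 b))
  have hj1 : S.Cof (coprod.inl ≫ i) := cof_comp S (cof_inl S hb) hi
  have hj2 : S.Cof (coprod.inr ≫ i) := cof_comp S (cof_inr S ha) hi
  have hz : S.Cofibrant z := by
    have : S.Cof (initial.to b ≫ coprod.inr ≫ i) := cof_comp S hb hj2
    simpa [ModelStructure.Cofibrant] using this
  have e1 : (coprod.inl ≫ i) ≫ p = f := by rw [Category.assoc, hfac]; exact coprod.inl_desc _ _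
  have e2 : (coprod.inr ≫ i) ≫ p = 𝟙 b := by rw [Category.assoc, hfac]; exact coprod.inr_desc _ _
  have hj2W : S.W (coprod.inr ≫ i) :=
    S.W.of_postcomp _ p hpW (by rw [e2]; exact W_id S b)
  have hj1W : S.W (coprod.inl ≫ i) :=
    S.W.of_postcomp _ p hpW (by rw [e1]; exact hf)
  have h1 : WR (F.map (coprod.inl ≫ i)) := hF _ ha hz hj1W hj1
  have h2 : WR (F.map (coprod.inr ≫ i)) := hF _ hb hz hj2W hj2
  have hp : WR (F.map p) := by
    refine WR.of_precomp (F.map (coprod.inr ≫ i)) (F.map p) h2 ?_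
    rw [← F.map_comp, e2]
    exact hWR_iso _ (inferInstanceAs (IsIso (F.map (𝟙 b))))
  have : WR (F.map (coprod.inl ≫ i) ≫ F.map p) := hWR_comp.comp_mem _ _ h1 hp
  rwa [← F.map_comp, e1] at this


end Statement2
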